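/- arXiv:1910.06783 — 4 statements merged into one kernel-verified Lean document; each statement's English description precedes it below -/
import Mathlib

section
/- Let d ≥ 1 and k ∈ ℕ. Let p : Fin d → MvPolynomial (Fin d) ℝ each of total degree at most k, let r be homogeneous of degree k, and set q i = p i + X i * r. Let n : Fin d → ℝ and c : ℝ. Then the polynomial s = (∑ i, C (n i) * p i) + C c * r has total degree at most k, and for every point x : Fin d → ℝ lying on the hyperplane ∑ i, n i * x i = c one has eval x (∑ i, C (n i) * q i) = eval x s. (Normal-trace part of the divergence properties of RT_k: on each face of a polytope, q·n coincides with a polynomial of degree at most k.) -/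
open MvPolynomial

theorem stmt_1 (d k : ℕ) (hd : 1 ≤ d)
    (p : Fin d → MvPolynomial (Fin d) ℝ) (hp : ∀ i, (p i).totalDegree ≤ k)
    (r : MvPolynomial (Fin d) ℝ) (hr : r.IsHomogeneous k)
    (q : Fin d → MvPolynomial (Fin d) ℝ) (hq : ∀ i, q i = p i + X i * r)
    (n : Fin d → ℝ) (c : ℝ)
    (s : MvPolynomial (Fin d) ℝ) (hs : s = (∑ i, C (n i) * p i) + C c * r) :
    s.totalDegree ≤ k ∧
      ∀ x : Fin d → ℝ, (∑ i, n i * x i) = c →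
        eval x (∑ i, C (n i) * q i) = eval x s := by
  constructor
  · subst hs
    refine le_trans (totalDegree_add _ _) (max_le ?_ ?_)
    · refine le_trans (totalDegree_finset_sum _ _) (Finset.sup_le fun i _ => ?_)
      exact le_trans (totalDegree_mul _ _)
        (by simpa [totalDegree_C] using hp i)
    · exact le_trans (totalDegree_mul _ _)
        (by simpa [totalDegree_C] using hr.totalDegree_le)
  · intro x hx
    subst hs
    simp only [hq]
    simp only [map_add, map_sum, map_mul, eval_C, eval_X]
    rw [← hx]
    ring_nf
    rw [Finset.sum_add_distrib]
    ring_nf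
    rw [Finset.mul_sum]
    congr 1
    exact Finset.sum_congr rfl fun i _ => by ring
end

section
/- Let d ≥ 1 and k ∈ ℕ. The ℝ-subspace of (Fin d → MvPolynomial (Fin d) ℝ) consisting of all d-tuples q for which there exist p : Fin d → MvPolynomial (Fin d) ℝ, each of total degree at most k, and a homogeneous polynomial r of degree k with q i = p i + X i * r for all i, is a finite-dimensional submodule of dimension d * (k + d).choose d + (k + d - 1).choose (d - 1). (Dimension of the simplicial Raviart–Thomas space RT_k.) -/
open MvPolynomial

/-- Finsupps of fixed degree are equivalent to `Sym`. -/
noncomputable def degEqEquivSym (α : Type*) [DecidableEq α] (k : ℕ) :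
    {n : α →₀ ℕ // n.degree = k} ≃ Sym α k := by
  refine (Equiv.subtypeEquiv (Multiset.toFinsupp (α := α)).toEquiv ?_).symm
  intro s
  show Multiset.card s = k ↔ (Multiset.toFinsupp s).degree = k
  have : (Multiset.toFinsupp s).degree = Multiset.card s := by
    rw [Finsupp.degree_apply]
    simp [Multiset.toFinsupp_apply, Multiset.toFinsupp_support,
      Multiset.toFinset_sum_count_eq]
  rw [this]

noncomputable def degLeEquiv (d k : ℕ) :
    {n : Fin d →₀ ℕ // n.degree ≤ k} ≃ {m : Option (Fin d) →₀ ℕ // m.degree = k} := by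
  have hdeg : ∀ {β : Type} [inst : Fintype β] (n : β →₀ ℕ), n.degree = ∑ i, n i := by
    intro β _ n
    unfold Finsupp.degree
    exact Finset.sum_subset (Finset.subset_univ _) (by
      intro x _ hx
      simpa using Finsupp.notMem_support_iff.mp hx)
  let e1 : {n : Fin d →₀ ℕ // n.degree ≤ k} ≃ {g : Fin d → ℕ // ∑ i, g i ≤ k} :=
    Equiv.subtypeEquiv Finsupp.equivFunOnFinite (fun n => by rw [hdeg n]; exact Iff.rfl)
  let e2 : {g : Fin d → ℕ // ∑ i, g i ≤ k} ≃ {f : Option (Fin d) → ℕ // ∑ o, f o = k} :=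
    { toFun := fun g => ⟨fun o => o.elim (k - ∑ i, g.1 i) g.1, by
        have := g.2
        rw [Fintype.sum_option]
        simp only [Option.elim]
        omega⟩
      invFun := fun f => ⟨fun i => f.1 (some i), by
        have := f.2
        rw [Fintype.sum_option] at this
        show ∑ i, f.1 (some i) ≤ k
        omega⟩
      left_inv := fun g => by ext i; rfl
      right_inv := fun f => by
        ext o
        cases o with
        | none =>
          have := f.2
          rw [Fintype.sum_option] at this
          show k - ∑ i, f.1 (some i) = f.1 none
          omega
        | some i => rfl }
  let e3 : {f : Option (Fin d) → ℕ // ∑ o, f o = k} ≃ {m : Option (Fin d) →₀ ℕ // m.degree = k} :=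
    Equiv.subtypeEquiv Finsupp.equivFunOnFinite.symm
      (fun f => by rw [hdeg (Finsupp.equivFunOnFinite.symm f)]; exact Iff.rfl)
  exact (e1.trans e2).trans e3

theorem stmt_3 (d k : ℕ) (hd : 1 ≤ d)
    (RT : Submodule ℝ (Fin d → MvPolynomial (Fin d) ℝ))
    (hRT : (RT : Set (Fin d → MvPolynomial (Fin d) ℝ)) =
      {q | ∃ (p : Fin d → MvPolynomial (Fin d) ℝ) (r : MvPolynomial (Fin d) ℝ),
        (∀ i, (p i).totalDegree ≤ k) ∧ r.IsHomogeneous k ∧ ∀ i, q i = p i + X i * r}) :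
    FiniteDimensional ℝ RT ∧
      Module.finrank ℝ RT = d * (k + d).choose d + (k + d - 1).choose (d - 1) := by
  classical
  set P := restrictTotalDegree (Fin d) ℝ k with hP
  set H := homogeneousSubmodule (Fin d) ℝ k with hH
  -- Cardinalities of the index sets
  have cardH : Nat.card {n : Fin d →₀ ℕ // n.degree = k} = (k + d - 1).choose (d - 1) := by
    rw [Nat.card_congr (degEqEquivSym (Fin d) k), Nat.card_eq_fintype_card,
      Sym.card_sym_eq_choose, Fintype.card_fin]
    have h1 : d + k - 1 = k + d - 1 := by omega
    rw [h1, ← Nat.choose_symm (by omega : d - 1 ≤ k + d - 1)]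
    congr 1
    omega
  have cardP : Nat.card {n : Fin d →₀ ℕ // n.degree ≤ k} = (k + d).choose d := by
    rw [Nat.card_congr ((degLeEquiv d k).trans (degEqEquivSym (Option (Fin d)) k)),
      Nat.card_eq_fintype_card, Sym.card_sym_eq_choose]
    simp only [Fintype.card_option, Fintype.card_fin]
    have h1 : d + 1 + k - 1 = k + d := by omega
    rw [h1, ← Nat.choose_symm (by omega : d ≤ k + d)]
    congr 1
    omega
  -- bases
  have hPset : P = MvPolynomial.restrictSupport ℝ {n : Fin d →₀ ℕ | n.degree ≤ k} := rfl
  have hHset : H = MvPolynomial.restrictSupport ℝ {n : Fin d →₀ ℕ | n.degree = k} := by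
    rw [hH, homogeneousSubmodule_eq_finsupp_supported]
    rfl
  have bP : Module.Basis {n : Fin d →₀ ℕ | n.degree ≤ k} ℝ P := hPset ▸ basisRestrictSupport ℝ _
  have bH : Module.Basis {n : Fin d →₀ ℕ | n.degree = k} ℝ H := hHset ▸ basisRestrictSupport ℝ _
  have finP : Finite {n : Fin d →₀ ℕ | n.degree ≤ k} :=
    Finite.of_equiv _ ((degLeEquiv d k).trans (degEqEquivSym (Option (Fin d)) k)).symm
  have finH : Finite {n : Fin d →₀ ℕ | n.degree = k} :=
    Finite.of_equiv _ (degEqEquivSym (Fin d) k).symm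
  haveI : FiniteDimensional ℝ P := Module.Finite.of_basis bP
  haveI : FiniteDimensional ℝ H := Module.Finite.of_basis bH
  have frP : Module.finrank ℝ P = (k + d).choose d := by
    rw [Module.finrank_eq_nat_card_basis bP]; exact cardP
  have frH : Module.finrank ℝ H = (k + d - 1).choose (d - 1) := by
    rw [Module.finrank_eq_nat_card_basis bH]; exact cardH
  -- the linear map
  let Φ : ((Fin d → P) × H) →ₗ[ℝ] (Fin d → MvPolynomial (Fin d) ℝ) :=
    { toFun := fun pr => fun i => (pr.1 i : MvPolynomial (Fin d) ℝ) + X i * (pr.2 : MvPolynomial (Fin d) ℝ)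
      map_add' := by
        intro a b
        funext i
        simp only [Prod.fst_add, Prod.snd_add, Pi.add_apply, Submodule.coe_add]
        ring
      map_smul' := by
        intro c a
        funext i
        simp only [Prod.smul_fst, Prod.smul_snd, Pi.smul_apply, Submodule.coe_smul,
          RingHom.id_apply, smul_add, smul_eq_mul]
        rw [mul_smul_comm] }
  have hrange : LinearMap.range Φ = RT := by
    ext q
    rw [LinearMap.mem_range]
    have hq : q ∈ RT ↔ q ∈ (RT : Set (Fin d → MvPolynomial (Fin d) ℝ)) := Iff.rfl
    rw [hq, hRT]
    constructor
    · rintro ⟨⟨p, r⟩, rfl⟩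
      exact ⟨fun i => (p i : MvPolynomial (Fin d) ℝ), (r : MvPolynomial (Fin d) ℝ),
        fun i => (mem_restrictTotalDegree _ _ _).mp (p i).2, r.2, fun i => rfl⟩
    · rintro ⟨p, r, hp, hr, hq⟩
      refine ⟨⟨fun i => ⟨p i, (mem_restrictTotalDegree _ _ _).mpr (hp i)⟩, ⟨r, hr⟩⟩, ?_⟩
      funext i
      exact (hq i).symm
  have hinj : Function.Injective Φ := by
    rw [← LinearMap.ker_eq_bot]
    rw [Submodule.eq_bot_iff]
    rintro ⟨p, r⟩ hker
    have h : ∀ i, (p i : MvPolynomial (Fin d) ℝ) + X i * (r : MvPolynomial (Fin d) ℝ) = 0 :=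
      fun i => congrFun hker i
    have i0 : Fin d := ⟨0, hd⟩
    have hr0 : (r : MvPolynomial (Fin d) ℝ) = 0 := by
      by_contra hr0
      have hhom : ((X i0 : MvPolynomial (Fin d) ℝ) * r).IsHomogeneous (1 + k) :=
        (isHomogeneous_X ℝ i0).mul r.2
      have hne : (X i0 : MvPolynomial (Fin d) ℝ) * r ≠ 0 :=
        mul_ne_zero (X_ne_zero i0) hr0
      have hdeg : ((X i0 : MvPolynomial (Fin d) ℝ) * r).totalDegree = 1 + k :=
        hhom.totalDegree hne
      have heq : (X i0 : MvPolynomial (Fin d) ℝ) * r = -(p i0 : MvPolynomial (Fin d) ℝ) := by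
        have := h i0; linear_combination this
      have hle : ((X i0 : MvPolynomial (Fin d) ℝ) * r).totalDegree ≤ k := by
        rw [heq, totalDegree_neg]
        exact (mem_restrictTotalDegree _ _ _).mp (p i0).2
      omega
    have hp0 : ∀ i, (p i : MvPolynomial (Fin d) ℝ) = 0 := by
      intro i
      have := h i
      rw [hr0, mul_zero, add_zero] at this
      exact this
    refine Prod.ext ?_ ?_
    · funext i
      exact Subtype.ext (hp0 i)
    · exact Subtype.ext hr0
  haveI : Module.Free ℝ P := Module.Free.of_basis bP
  haveI : Module.Free ℝ H := Module.Free.of_basis bH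
  haveI : FiniteDimensional ℝ ((Fin d → P) × H) := by infer_instance
  have E : ((Fin d → P) × H) ≃ₗ[ℝ] RT :=
    (LinearEquiv.ofInjective Φ hinj).trans (LinearEquiv.ofEq _ _ hrange)
  haveI : FiniteDimensional ℝ RT := Module.Finite.equiv E
  refine ⟨inferInstance, ?_⟩
  rw [← E.finrank_eq, Module.finrank_prod, Module.finrank_pi_fintype,
    Finset.sum_const, Finset.card_univ, Fintype.card_fin, smul_eq_mul, frP, frH]
end

section
/- Let d ≥ 1 and l₁, l₂ ∈ ℕ. Let p : Fin d → MvPolynomial (Fin d) ℝ with degreeOf j (p i) ≤ l₁ for all i, j, let r ∈ MvPolynomial (Fin d) ℝ with degreeOf j r ≤ l₂ for all j, and set q i = p i + X i * r. Let n : Fin d → ℝ and c : ℝ. Then the polynomial s = (∑ i, C (n i) * p i) + C c * r satisfies degreeOf j s ≤ max l₁ l₂ for every j, and for every point x : Fin d → ℝ with ∑ i, n i * x i = c one has eval x (∑ i, C (n i) * q i) = eval x s. (Polynomial core of Proposition 1: for q in the space H_k(K) = (A_k)^d + x·B_k, the restriction of the normal component q·n to a face with constant normal n and offset c lies in Q_{max{l₁,l₂}}.)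 -/
open MvPolynomial

theorem stmt_8 (d : ℕ) (hd : 1 ≤ d) (l₁ l₂ : ℕ)
    (p : Fin d → MvPolynomial (Fin d) ℝ) (hp : ∀ i j, degreeOf j (p i) ≤ l₁)
    (r : MvPolynomial (Fin d) ℝ) (hr : ∀ j, degreeOf j r ≤ l₂)
    (q : Fin d → MvPolynomial (Fin d) ℝ) (hq : ∀ i, q i = p i + X i * r)
    (n : Fin d → ℝ) (c : ℝ)
    (s : MvPolynomial (Fin d) ℝ) (hs : s = (∑ i, C (n i) * p i) + C c * r) :
    (∀ j, degreeOf j s ≤ max l₁ l₂) ∧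
      ∀ x : Fin d → ℝ, (∑ i, n i * x i) = c →
        eval x (∑ i, C (n i) * q i) = eval x s := by
  constructor
  · intro j
    subst hs
    refine le_trans (degreeOf_add_le _ _ _) (max_le_max ?_ ?_)
    · refine le_trans (degreeOf_sum_le _ _ _) ?_
      exact Finset.sup_le fun i _ => le_trans (degreeOf_C_mul_le _ _ _) (hp i j)
    · exact le_trans (degreeOf_C_mul_le _ _ _) (hr j)
  · intro x hx
    subst hs
    simp only [hq, map_add, map_sum, map_mul, eval_C, eval_X, mul_add]
    rw [Finset.sum_add_distrib]
    congr 1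
    rw [← hx, Finset.sum_mul]
    congr 1; ext i; ring
end

section
/- Let d ≥ 1 and k ∈ ℕ. The ℝ-subspace of (Fin d → MvPolynomial (Fin d) ℝ) consisting of all d-tuples q such that for each i, degreeOf i (q i) ≤ k + 1 and degreeOf j (q i) ≤ k for every j ≠ i, is finite dimensional of dimension d * (k + 2) * (k + 1)^(d − 1). (Dimension of the Raviart–Thomas space RT_k = ×_{i=1}^{d} P_{ζ_i(k+1, k, …, k)} on quadrangles/hexahedra.) -/
open MvPolynomial

noncomputable section

variable (d : ℕ)

/-- span of monomials with exponents ≤ n -/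
def boxSpan (n : Fin d →₀ ℕ) : Submodule ℝ (MvPolynomial (Fin d) ℝ) :=
  Submodule.span ℝ ((fun s => (monomial s (1:ℝ) : MvPolynomial (Fin d) ℝ)) ''
    ↑(Finset.Iic n))

lemma mem_boxSpan_iff (n : Fin d →₀ ℕ) (p : MvPolynomial (Fin d) ℝ) :
    p ∈ boxSpan d n ↔ ∀ j, degreeOf j p ≤ n j := by
  constructor
  · intro hp
    refine Submodule.span_induction ?_ ?_ ?_ ?_ hp
    · rintro x ⟨s, hs, rfl⟩ j
      rw [Finset.mem_coe, Finset.mem_Iic] at hs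
      rw [degreeOf_monomial_eq s j (one_ne_zero)]
      exact hs j
    · intro j; simp
    · intro x y _ _ hx hy j
      exact le_trans (degreeOf_add_le j x y) (max_le (hx j) (hy j))
    · intro c x _ hx j
      rw [smul_eq_C_mul]
      refine le_trans (degreeOf_mul_le j _ _) ?_
      rw [degreeOf_C]
      simpa using hx j
  · intro h
    have hp : p = ∑ v ∈ p.support, monomial v (coeff v p) :=
      (support_sum_monomial_coeff p).symm
    rw [hp]
    refine Submodule.sum_mem _ ?_
    intro v hv
    have hv' : v ∈ Finset.Iic n := by
      rw [Finset.mem_Iic]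
      intro j
      exact le_trans (by rw [degreeOf_eq_sup]; exact Finset.le_sup (f := fun m => m j) hv) (h j)
    have : monomial v (coeff v p) = coeff v p • monomial v 1 := by
      rw [smul_monomial, smul_eq_mul, mul_one]
    rw [this]
    exact Submodule.smul_mem _ _ (Submodule.subset_span ⟨v, hv', rfl⟩)

lemma finrank_boxSpan (n : Fin d →₀ ℕ) :
    Module.finrank ℝ (boxSpan d n) = ∏ j, (n j + 1) := by
  classical
  set T : Finset (Fin d →₀ ℕ) := Finset.Iic n with hT
  have hli : LinearIndependent ℝ
      (fun s : (T : Set (Fin d →₀ ℕ)) => (monomial (s : Fin d →₀ ℕ) (1:ℝ) : MvPolynomial (Fin d) ℝ)) := by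
    have := (MvPolynomial.basisMonomials (Fin d) ℝ).linearIndependent
    rw [coe_basisMonomials] at this
    exact this.comp _ Subtype.val_injective
  have hrange : Set.range
      (fun s : (T : Set (Fin d →₀ ℕ)) => (monomial (s : Fin d →₀ ℕ) (1:ℝ) : MvPolynomial (Fin d) ℝ))
      = (fun s => (monomial s (1:ℝ) : MvPolynomial (Fin d) ℝ)) '' ↑T := by
    rw [Set.image_eq_range]
  have hb : Module.Basis (T : Set (Fin d →₀ ℕ)) ℝ (boxSpan d n) := by
    have := Module.Basis.span hli
    rw [hrange] at this
    exact this
  rw [Module.finrank_eq_card_basis hb]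
  have hcard : Fintype.card ((T : Set (Fin d →₀ ℕ))) = T.card := by
    simpa using Fintype.card_coe T
  rw [hcard, hT, Finsupp.card_Iic]
  have h1 : ∀ i ∈ n.support, (Finset.Iic (n i)).card = n i + 1 := fun i _ => Nat.card_Iic _
  rw [Finset.prod_congr rfl h1]
  refine Finset.prod_subset (Finset.subset_univ _) ?_
  intro x _ hx
  simp [Finsupp.notMem_support_iff.mp hx]


def piSubEquiv {ι : Type*} {M : ι → Type*} [∀ i, AddCommGroup (M i)]
    [∀ i, Module ℝ (M i)] (S : ∀ i, Submodule ℝ (M i)) :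
    (Submodule.pi Set.univ S) ≃ₗ[ℝ] Π i, S i where
  toFun q := fun i => ⟨q.1 i, q.2 i (Set.mem_univ i)⟩
  invFun f := ⟨fun i => f i, fun i _ => (f i).2⟩
  left_inv q := rfl
  right_inv f := rfl
  map_add' q r := rfl
  map_smul' c q := rfl

set_option synthInstance.maxHeartbeats 1000000 in
theorem stmt_12 (d k : ℕ) (hd : 1 ≤ d)
    (RT : Submodule ℝ (Fin d → MvPolynomial (Fin d) ℝ))
    (hRT : (RT : Set (Fin d → MvPolynomial (Fin d) ℝ)) =
      {q | ∀ i, degreeOf i (q i) ≤ k + 1 ∧ ∀ j ≠ i, degreeOf j (q i) ≤ k}) :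
    FiniteDimensional ℝ RT ∧
      Module.finrank ℝ RT = d * (k + 2) * (k + 1) ^ (d - 1) := by
  classical
  set N : Fin d → (Fin d →₀ ℕ) :=
    fun i => Finsupp.single i 1 + Finsupp.equivFunOnFinite.symm (fun _ => k) with hNdef
  have hN : ∀ i j, N i j = if j = i then k + 1 else k := by
    intro i j
    simp only [hNdef, Finsupp.add_apply, Finsupp.single_apply,
      Finsupp.coe_equivFunOnFinite_symm]
    by_cases h : j = i
    · simp [h, Nat.add_comm]
    · simp [h, Ne.symm h]
  have hRT' : RT = Submodule.pi Set.univ (fun i => boxSpan d (N i)) := by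
    apply SetLike.coe_injective
    rw [hRT]
    ext q
    simp only [Set.mem_setOf_eq, SetLike.mem_coe, Submodule.mem_pi, Set.mem_univ,
      forall_true_left]
    constructor
    · intro h i
      rw [mem_boxSpan_iff]
      intro j
      rw [hN]
      by_cases hji : j = i
      · subst hji; simpa using (h j).1
      · simpa [hji] using (h i).2 j hji
    · intro h i
      have := (mem_boxSpan_iff d (N i) (q i)).mp (h i)
      constructor
      · simpa [hN] using this i
      · intro j hji
        simpa [hN, hji] using this j
  haveI hFD : ∀ i, FiniteDimensional ℝ (boxSpan d (N i)) := fun i =>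
    FiniteDimensional.span_of_finite ℝ ((Finset.Iic (N i)).finite_toSet.image _)
  have e : RT ≃ₗ[ℝ] Π i, (boxSpan d (N i)) := by
    rw [hRT']
    exact piSubEquiv _
  have hFDpi : FiniteDimensional ℝ (Π i, (boxSpan d (N i))) := by infer_instance
  have hFDRT : FiniteDimensional ℝ RT := FiniteDimensional.of_injective e.toLinearMap e.injective
  refine ⟨hFDRT, ?_⟩
  have hprod : ∀ i : Fin d, ∏ j, (N i j + 1) = (k + 2) * (k + 1) ^ (d - 1) := by
    intro i
    have h1 : ∀ j : Fin d, N i j + 1 = if j = i then k + 2 else k + 1 := by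
      intro j; rw [hN]; split <;> rfl
    rw [Finset.prod_congr rfl (fun j _ => h1 j)]
    rw [← Finset.mul_prod_erase Finset.univ _ (Finset.mem_univ i), if_pos rfl]
    rw [Finset.prod_congr rfl (fun j hj => if_neg (Finset.ne_of_mem_erase hj)),
      Finset.prod_const, Finset.card_erase_of_mem (Finset.mem_univ i),
      Finset.card_univ, Fintype.card_fin]
  rw [e.finrank_eq, Module.finrank_pi_fintype]
  have : ∀ i : Fin d, Module.finrank ℝ (boxSpan d (N i)) = (k + 2) * (k + 1) ^ (d - 1) := by
    intro i
    rw [finrank_boxSpan, hprod]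
  rw [Finset.sum_congr rfl (fun i _ => this i), Finset.sum_const, Finset.card_univ,
    Fintype.card_fin, smul_eq_mul, mul_assoc]
end
end
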